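/- Let F = ℝ, L = ℂ. Let K_∞ = {[[A,B],[-B,A]] : A,B ∈ M_2(ℂ), ^t Ā B = ^t B̄ A, ^t Ā A + ^t B̄ B = 1} be the maximal compact subgroup of GU(2,2;ℂ)^+ stabilizing I = diag(i,i) in ℍ_2. Then the intersection of M^{(1)}(ℝ)M^{(2)}(ℝ)N(ℝ) with K_∞ consists exactly of the matrices diag-block(ζ; α,β block) of the form with diagonal entries ζ, α, ζ, α and (2,4)-entry β, (4,2)-entry −β, where ζ, α, β ∈ ℂ satisfy |ζ| = 1, |α|² + |β|² = 1 and αβ̄ = βᾱ. -/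
import Mathlib


open Matrix Complex

noncomputable section

local notation "conj'" => starRingEnd ℂ

/-- The form `J = [[0,1₂],[-1₂,0]]`. -/
def JGU : Matrix (Fin 4) (Fin 4) ℂ :=
  !![0, 0, 1, 0; 0, 0, 0, 1; -1, 0, 0, 0; 0, -1, 0, 0]

/-- An element of `M^{(1)}(ℝ)`. -/
def M1mat (ζ : ℂ) : Matrix (Fin 4) (Fin 4) ℂ :=
  !![ζ, 0, 0, 0; 0, 1, 0, 0; 0, 0, (conj' ζ)⁻¹, 0; 0, 0, 0, 1]

/-- The shape of an element of `M^{(2)}(ℝ) ≅ GU(1,1;ℂ)(ℝ)` inside `GU(2,2;ℂ)`. -/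
def M2mat (a b c d : ℂ) (μ : ℝ) : Matrix (Fin 4) (Fin 4) ℂ :=
  !![1, 0, 0, 0; 0, a, 0, b; 0, 0, (μ : ℂ), 0; 0, c, 0, d]

/-- An element of the unipotent radical `N(ℝ)`, with `z, y ∈ ℂ`, `w ∈ ℝ`. -/
def Nmat (z y : ℂ) (w : ℝ) : Matrix (Fin 4) (Fin 4) ℂ :=
  !![1, z, 0, 0; 0, 1, 0, 0; 0, 0, 1, 0; 0, 0, -conj' z, 1] *
    !![1, 0, (w : ℂ), y; 0, 1, conj' y, 0; 0, 0, 1, 0; 0, 0, 0, 1]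

/-- The set `M^{(1)}(ℝ)M^{(2)}(ℝ)N(ℝ)`. -/
def MMN : Set (Matrix (Fin 4) (Fin 4) ℂ) :=
  {g | ∃ (ζ : ℂ), ζ ≠ 0 ∧ ∃ (a b c d : ℂ) (μ : ℝ), μ ≠ 0 ∧
    (μ : ℂ) = conj' a * d - b * conj' c ∧
    ((M2mat a b c d μ).map conj')ᵀ * JGU * M2mat a b c d μ = (μ : ℂ) • JGU ∧
    ∃ (z y : ℂ) (w : ℝ), g = M1mat ζ * M2mat a b c d μ * Nmat z y w}

/-- The reconciliation of blocks: view `fromBlocks` as a `Fin 4` matrix. -/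
def fromBlocks4 (A B C D : Matrix (Fin 2) (Fin 2) ℂ) : Matrix (Fin 4) (Fin 4) ℂ :=
  (Matrix.fromBlocks A B C D).submatrix (finSumFinEquiv (m := 2) (n := 2)).symm
    (finSumFinEquiv (m := 2) (n := 2)).symm

/-- The set `K_∞` as `Fin 4` matrices. -/
def KinfSet : Set (Matrix (Fin 4) (Fin 4) ℂ) :=
  {g | ∃ A B : Matrix (Fin 2) (Fin 2) ℂ,
    g = fromBlocks4 A B (-B) A ∧ Aᴴ * B = Bᴴ * A ∧ Aᴴ * A + Bᴴ * B = 1}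

/-- The right-hand side of the intersection formula. -/
def MMNKtarget : Set (Matrix (Fin 4) (Fin 4) ℂ) :=
  {g | ∃ ζ α β : ℂ,
    g = !![ζ, 0, 0, 0; 0, α, 0, β; 0, 0, ζ, 0; 0, -β, 0, α] ∧
    Complex.normSq ζ = 1 ∧ Complex.normSq α + Complex.normSq β = 1 ∧
    α * conj' β = β * conj' α}

set_option maxHeartbeats 1000000 in
theorem prod_eval (ζ a b c d : ℂ) (μ : ℝ) (z y : ℂ) (w : ℝ) :
    M1mat ζ * M2mat a b c d μ * Nmat z y w =
    !![ζ, ζ*z, ζ*((w:ℂ) + z*conj' y), ζ*y;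
       0, a, a*conj' y - b*conj' z, b;
       0, 0, (conj' ζ)⁻¹*(μ:ℂ), 0;
       0, c, c*conj' y - d*conj' z, d] := by
  ext i j
  fin_cases i <;> fin_cases j <;>
    simp [M1mat, M2mat, Nmat, Matrix.mul_apply, Fin.sum_univ_four] <;>
    first
      | ring1
      | (norm_num [Matrix.vecHead, Matrix.vecTail, Function.comp])

theorem fromBlocks4_eq (A B C D : Matrix (Fin 2) (Fin 2) ℂ) : fromBlocks4 A B C D =
    !![A 0 0, A 0 1, B 0 0, B 0 1; A 1 0, A 1 1, B 1 0, B 1 1;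
       C 0 0, C 0 1, D 0 0, D 0 1; C 1 0, C 1 1, D 1 0, D 1 1] := by
  ext i j
  fin_cases i <;> fin_cases j <;>
    simp [fromBlocks4, Matrix.submatrix_apply, finSumFinEquiv, Equiv.symm] <;> rfl

/-- `M^{(1)}(ℝ)M^{(2)}(ℝ)N(ℝ) ∩ K_∞` consists exactly of the matrices
`diag(ζ,α,ζ,α)` with `(2,4)`-entry `β` and `(4,2)`-entry `-β`, where `|ζ| = 1`,
`|α|² + |β|² = 1` and `αβ̄ = βᾱ`. -/

theorem MMN_inter_Kinf : MMN ∩ KinfSet = MMNKtarget := by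
  ext g
  simp only [Set.mem_inter_iff, MMN, KinfSet, MMNKtarget, Set.mem_setOf_eq]
  constructor
  · rintro ⟨⟨ζ, hζ, a, b, c, d, μ, hμ, hdet, hJ, z, y, w, hg⟩, A, B, hgK, hAB, hAA⟩
    rw [prod_eval] at hg
    rw [fromBlocks4_eq] at hgK
    have h := hg.symm.trans hgK
    have e00 : ζ = A 0 0 := by have := congrFun (congrFun h 0) 0; simpa using this
    have e23 : (0:ℂ) = A 0 1 := by have := congrFun (congrFun h 2) 3; simpa using this
    have e10 : (0:ℂ) = A 1 0 := by have := congrFun (congrFun h 1) 0; simpa using this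
    have e11 : a = A 1 1 := by have := congrFun (congrFun h 1) 1; simpa using this
    have e20 : B 0 0 = 0 := by
      have := congrFun (congrFun h 2) 0
      simpa [Matrix.vecHead, Matrix.vecTail, neg_eq_zero] using this
    have e21 : B 0 1 = 0 := by
      have := congrFun (congrFun h 2) 1
      simpa [Matrix.vecHead, Matrix.vecTail, neg_eq_zero] using this
    have e30 : B 1 0 = 0 := by
      have := congrFun (congrFun h 3) 0
      simpa [Matrix.vecHead, Matrix.vecTail, neg_eq_zero] using this
    have e13 : b = B 1 1 := by have := congrFun (congrFun h 1) 3; simpa using this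
    have hA : A = !![ζ, 0; 0, a] := by
      ext i j
      fin_cases i <;> fin_cases j <;>
        simp [← e00, ← e23, ← e10, ← e11]
    have hB : B = !![0, 0; 0, b] := by
      ext i j
      fin_cases i <;> fin_cases j <;>
        simp [← e13, e20, e21, e30]
    subst hA hB
    refine ⟨ζ, a, b, ?_, ?_, ?_, ?_⟩
    · rw [hgK]
      ext i j
      fin_cases i <;> fin_cases j <;> simp
    · have := congrFun (congrFun hAA 0) 0
      simp [Matrix.mul_apply, Fin.sum_univ_two, Matrix.conjTranspose_apply,
        Matrix.one_apply] at this
      have h2 : ζ * conj' ζ = 1 := by rw [mul_comm]; exact this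
      rw [Complex.mul_conj] at h2
      exact_mod_cast h2
    · have := congrFun (congrFun hAA 1) 1
      simp [Matrix.mul_apply, Fin.sum_univ_two, Matrix.conjTranspose_apply,
        Matrix.one_apply] at this
      have h2 : (Complex.normSq a : ℂ) + (Complex.normSq b : ℂ) = 1 := by
        rw [← Complex.mul_conj, ← Complex.mul_conj]
        calc a * conj' a + b * conj' b = conj' a * a + conj' b * b := by ring
        _ = 1 := this
      exact_mod_cast h2
    · have := congrFun (congrFun hAB 1) 1
      simp [Matrix.mul_apply, Fin.sum_univ_two, Matrix.conjTranspose_apply] at this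
      have h2 := congrArg conj' this
      simp only [_root_.map_mul, Complex.conj_conj] at h2
      linear_combination h2
  · rintro ⟨ζ, α, β, hg, h1, h2, h3⟩
    have hζ : ζ ≠ 0 := by
      intro h0
      rw [h0] at h1
      simp at h1
    have hz : conj' ζ * ζ = 1 := by
      rw [mul_comm, Complex.mul_conj]
      exact_mod_cast h1
    have hab : conj' α * α + conj' β * β = 1 := by
      have : α * conj' α + β * conj' β = 1 := by
        rw [Complex.mul_conj, Complex.mul_conj]
        exact_mod_cast h2
      linear_combination this
    have hcomm : conj' α * β = conj' β * α := by
      have := congrArg conj' h3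
      simp only [_root_.map_mul, Complex.conj_conj] at this
      linear_combination this
    have hinv : (conj' ζ)⁻¹ = ζ := (eq_inv_of_mul_eq_one_right hz).symm
    constructor
    · refine ⟨ζ, hζ, α, β, -β, α, 1, one_ne_zero, ?_, ?_, 0, 0, 0, ?_⟩
      · simp only [map_neg, Complex.ofReal_one]
        linear_combination -hab
      · ext i j
        fin_cases i <;> fin_cases j <;>
          simp [M2mat, JGU, Matrix.mul_apply, Fin.sum_univ_four, Matrix.map_apply,
            Matrix.smul_apply, Matrix.vecHead, Matrix.vecTail] <;>
          first
            | ring1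
            | linear_combination hab
            | linear_combination -hab
            | linear_combination hcomm
            | linear_combination -hcomm
            | linear_combination 2*hab
            | linear_combination -2*hab
            | linear_combination 2*hcomm
            | linear_combination -2*hcomm
            | (norm_num [Matrix.vecHead, Matrix.vecTail, Function.comp])
      · rw [prod_eval, hg]
        ext i j
        fin_cases i <;> fin_cases j <;> simp [hinv]
    · refine ⟨!![ζ, 0; 0, α], !![0, 0; 0, β], ?_, ?_, ?_⟩
      · rw [fromBlocks4_eq, hg]
        ext i j
        fin_cases i <;> fin_cases j <;> simp
      · ext i j
        fin_cases i <;> fin_cases j <;>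
          simp [Matrix.mul_apply, Fin.sum_univ_two, Matrix.conjTranspose_apply] <;>
          linear_combination hcomm
      · ext i j
        fin_cases i <;> fin_cases j <;>
          simp [Matrix.mul_apply, Fin.sum_univ_two, Matrix.conjTranspose_apply,
            Matrix.one_apply] <;>
          first
            | linear_combination hz
            | linear_combination hab


end
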